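/- There are no Ũ-cycles: there is no x ∈ ℝ with x ≥ 0 and no l ∈ ℕ with l ≥ 1 such that Ũ^l(x) = x. -/
import Mathlib


/-- The flipped 3x+1 function: `Ũx = (3x+1)/2` if `⌊x⌋` is even, `x/2` if `⌊x⌋` is odd. -/
noncomputable def Utilde (x : ℝ) : ℝ := if Even ⌊x⌋ then (3 * x + 1) / 2 else x / 2

namespace NoUtildeAux

/-- `gg x = 1 - fract x`, the distance from the fractional part to 1. -/
noncomputable def gg (x : ℝ) : ℝ := 1 - Int.fract x

/-- The potential function `Φ(x) = x / (1 - fract x)`. -/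
noncomputable def Phi (x : ℝ) : ℝ := x / gg x

lemma gg_pos (x : ℝ) : 0 < gg x := by
  have := Int.fract_lt_one x; simp only [gg]; linarith

lemma gg_le_one (x : ℝ) : gg x ≤ 1 := by
  have := Int.fract_nonneg x; simp only [gg]; linarith

lemma Utilde_pos {x : ℝ} (hx : 0 ≤ x) : 0 < Utilde x := by
  unfold Utilde
  split_ifs with h
  · linarith
  · have h0 : (0:ℤ) ≤ ⌊x⌋ := Int.floor_nonneg.mpr hx
    have h1 : ⌊x⌋ ≠ 0 := by rintro h0'; exact h (h0' ▸ Even.zero)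
    have h2 : (1:ℤ) ≤ ⌊x⌋ := by omega
    have h3 : (1:ℝ) ≤ x := by
      have hc : ((1:ℤ):ℝ) ≤ (⌊x⌋:ℝ) := by exact_mod_cast h2
      have := Int.floor_le x
      push_cast at hc
      linarith
    linarith

/-- Fractional part after an odd step. -/
lemma fract_odd {x : ℝ} (h : ¬ Even ⌊x⌋) :
    Int.fract (x / 2) = (1 + Int.fract x) / 2 := by
  rw [Int.not_even_iff_odd] at h
  obtain ⟨k, hk⟩ := h
  have hfl : ((⌊x⌋ : ℤ) : ℝ) + Int.fract x = x := Int.floor_add_fract x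
  rw [hk] at hfl
  push_cast at hfl
  have hxe : x / 2 = (k : ℝ) + (1 + Int.fract x) / 2 := by linarith
  rw [hxe, Int.fract_intCast_add]
  refine Int.fract_eq_self.mpr ⟨by nlinarith [Int.fract_nonneg x], ?_⟩
  nlinarith [Int.fract_lt_one x]

/-- Fractional part after an even step, small fractional part. -/
lemma fract_even_small {x : ℝ} (h : Even ⌊x⌋) (hf : Int.fract x < 1/3) :
    Int.fract ((3 * x + 1) / 2) = (3 * Int.fract x + 1) / 2 := by
  obtain ⟨k, hk⟩ := h
  have hfl : ((⌊x⌋ : ℤ) : ℝ) + Int.fract x = x := Int.floor_add_fract x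
  rw [hk] at hfl
  push_cast at hfl
  have hxe : (3 * x + 1) / 2 = ((3 * k : ℤ) : ℝ) + (3 * Int.fract x + 1) / 2 := by
    push_cast; linarith
  rw [hxe, Int.fract_intCast_add]
  refine Int.fract_eq_self.mpr ⟨by nlinarith [Int.fract_nonneg x], by nlinarith⟩

/-- Fractional part after an even step, large fractional part. -/
lemma fract_even_large {x : ℝ} (h : Even ⌊x⌋) (hf : 1/3 ≤ Int.fract x) :
    Int.fract ((3 * x + 1) / 2) = (3 * Int.fract x - 1) / 2 := by
  obtain ⟨k, hk⟩ := h
  have hfl : ((⌊x⌋ : ℤ) : ℝ) + Int.fract x = x := Int.floor_add_fract x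
  rw [hk] at hfl
  push_cast at hfl
  have hxe : (3 * x + 1) / 2 = ((3 * k + 1 : ℤ) : ℝ) + (3 * Int.fract x - 1) / 2 := by
    push_cast; linarith
  rw [hxe, Int.fract_intCast_add]
  refine Int.fract_eq_self.mpr ⟨by nlinarith, ?_⟩
  nlinarith [Int.fract_lt_one x]

/-- The key step estimates: `Φ` does not decrease along a step, and if it stays
equal then `gg` at least halves. -/
lemma step {x : ℝ} (hx : 0 < x) :
    x * gg (Utilde x) ≤ Utilde x * gg x ∧
    (Utilde x * gg x ≤ x * gg (Utilde x) → gg (Utilde x) ≤ gg x / 2) := by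
  have hf0 := Int.fract_nonneg x
  have hf1 := Int.fract_lt_one x
  by_cases h : Even ⌊x⌋
  · have hU : Utilde x = (3 * x + 1) / 2 := if_pos h
    by_cases hf : Int.fract x < 1/3
    · have hfr := fract_even_small h hf
      have hg' : gg (Utilde x) = (1 - 3 * Int.fract x) / 2 := by
        rw [hU]; unfold gg; rw [hfr]; ring
      constructor
      · rw [hg', hU]
        unfold gg
        nlinarith
      · intro _
        rw [hg']
        unfold gg
        linarith
    · push_neg at hf
      have hfr := fract_even_large h hf
      have hg' : gg (Utilde x) = 3 * (1 - Int.fract x) / 2 := by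
        rw [hU]; unfold gg; rw [hfr]; ring
      have hggpos : 0 < gg x := gg_pos x
      constructor
      · rw [hg', hU]
        unfold gg at *
        nlinarith
      · intro hle
        exfalso
        rw [hg', hU] at hle
        unfold gg at *
        nlinarith
  · have hU : Utilde x = x / 2 := if_neg h
    have hfr := fract_odd h
    have hg' : gg (Utilde x) = gg x / 2 := by
      rw [hU]; unfold gg; rw [hfr]; ring
    refine ⟨?_, fun _ => le_of_eq hg'⟩
    rw [hg', hU]
    exact le_of_eq (by ring)

lemma phi_step_mono {x : ℝ} (hx : 0 < x) : Phi x ≤ Phi (Utilde x) := by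
  have h1 := (step hx).1
  unfold Phi
  rw [div_le_div_iff₀ (gg_pos x) (gg_pos (Utilde x))]
  linarith

end NoUtildeAux

open NoUtildeAux in
/-- There are no `Ũ`-cycles. -/
theorem no_Utilde_cycles (x : ℝ) (hx : 0 ≤ x) (l : ℕ) (hl : 1 ≤ l) :
    Utilde^[l] x ≠ x := by
  intro hcyc
  -- all iterates are nonnegative, and positive from step 1 on
  have hpos : ∀ n : ℕ, 0 ≤ Utilde^[n] x := by
    intro n
    induction n with
    | zero => simpa using hx
    | succ n ih =>
        rw [Function.iterate_succ_apply']
        exact le_of_lt (Utilde_pos ih)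
  -- x itself is positive (since x = Ũ^[l] x = Ũ of something nonneg)
  have hxpos : 0 < x := by
    rw [← hcyc]
    obtain ⟨k, rfl⟩ : ∃ k, l = k + 1 := ⟨l - 1, by omega⟩
    rw [Function.iterate_succ_apply']
    exact Utilde_pos (hpos k)
  have hposn : ∀ n : ℕ, 0 < Utilde^[n] x := by
    intro n
    induction n with
    | zero => simpa using hxpos
    | succ n ih =>
        rw [Function.iterate_succ_apply']
        exact Utilde_pos (le_of_lt ih)
  -- Φ is monotone along the orbit
  have hmono : ∀ m n : ℕ, m ≤ n → Phi (Utilde^[m] x) ≤ Phi (Utilde^[n] x) := by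
    intro m n hmn
    induction n with
    | zero => simp_all
    | succ n ih =>
        rcases Nat.lt_or_ge m (n+1) with h | h
        · have h1 : Phi (Utilde^[m] x) ≤ Phi (Utilde^[n] x) := ih (Nat.lt_succ_iff.mp h)
          have h2 : Phi (Utilde^[n] x) ≤ Phi (Utilde^[n+1] x) := by
            rw [Function.iterate_succ_apply']
            exact phi_step_mono (hposn n)
          linarith
        · have : m = n + 1 := le_antisymm hmn h
          subst this; exact le_rfl
  -- hence Φ is constant on the cycle
  have hconst : ∀ n : ℕ, n ≤ l → Phi (Utilde^[n] x) = Phi x := by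
    intro n hn
    have h1 : Phi (Utilde^[0] x) ≤ Phi (Utilde^[n] x) := hmono 0 n (Nat.zero_le n)
    have h2 : Phi (Utilde^[n] x) ≤ Phi (Utilde^[l] x) := hmono n l hn
    rw [hcyc] at h2
    simp only [Function.iterate_zero_apply] at h1
    linarith
  -- so each step at least halves gg
  have hhalf : ∀ n : ℕ, n < l → gg (Utilde^[n+1] x) ≤ gg (Utilde^[n] x) / 2 := by
    intro n hn
    have he : Phi (Utilde^[n] x) = Phi (Utilde^[n+1] x) := by
      rw [hconst n (le_of_lt hn), hconst (n+1) hn]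
    rw [Function.iterate_succ_apply'] at he ⊢
    apply (step (hposn n)).2
    unfold Phi at he
    rw [div_eq_div_iff (gg_pos _).ne' (gg_pos _).ne'] at he
    linarith
  -- so gg decays geometrically
  have hdecay : ∀ n : ℕ, n ≤ l → gg (Utilde^[n] x) ≤ gg x / 2 ^ n := by
    intro n hn
    induction n with
    | zero => simp
    | succ n ih =>
        have h1 := hhalf n (Nat.lt_of_succ_le hn)
        have h2 := ih (Nat.le_of_succ_le hn)
        have h3 : (0:ℝ) < 2 ^ n := by positivity
        rw [pow_succ]
        calc gg (Utilde^[n+1] x) ≤ gg (Utilde^[n] x) / 2 := h1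
          _ ≤ gg x / 2 ^ n / 2 := by linarith
          _ = gg x / (2 ^ n * 2) := by ring
  -- contradiction at n = l
  have hfin := hdecay l le_rfl
  rw [hcyc] at hfin
  have h2l : (2:ℝ) ≤ 2 ^ l := by
    calc (2:ℝ) = 2 ^ 1 := (pow_one 2).symm
    _ ≤ 2 ^ l := pow_le_pow_right₀ (by norm_num) hl
  have hg := gg_pos x
  have h2lpos : (0:ℝ) < 2 ^ l := by positivity
  rw [le_div_iff₀ h2lpos] at hfin
  nlinarith
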